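/- Let F be a subfield of ℝ and let K ⊂ ℝ be a noncompact basic closed semi-algebraic set containing a ray [a,∞) with a ∈ F. Suppose c ∈ ∂K is algebraic over F with [F(c):F] ≥ 3. Then Pos(K) = {f ∈ F[x] : f ≥ 0 on K} is not a finitely generated preordering of F[x]. -/

import Mathlib

open Polynomial

noncomputable def pev (F : Subfield ℝ) (f : F[X]) (x : ℝ) : ℝ := Polynomial.aeval x f

/-- `σ` is a finite sum of terms `t·g²` with `t ∈ F`, `t ≥ 0`, `g ∈ F[x]`. -/
def SumWtSq (F : Subfield ℝ) (σ : F[X]) : Prop :=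
  ∃ (n : ℕ) (t : Fin n → F) (g : Fin n → F[X]),
    (∀ i, (0:ℝ) ≤ (t i : ℝ)) ∧ σ = ∑ i, C (t i) * g i ^ 2


/-- membership in the preordering of `F[x]` generated by `g 0, …, g (s-1)`. -/
def InPre (F : Subfield ℝ) {s : ℕ} (g : Fin s → F[X]) (f : F[X]) : Prop :=
  ∃ σ : (Fin s → Bool) → F[X], (∀ e, SumWtSq F (σ e)) ∧
    f = ∑ e : Fin s → Bool, σ e * ∏ i, (if e i then g i else 1)

lemma lc_pos_of_nonneg_on_ray (P : ℝ[X]) (a : ℝ) (h : ∀ x, a ≤ x → 0 ≤ P.eval x)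
    (hP : P ≠ 0) : 0 < P.leadingCoeff := by
  by_contra hlc
  push_neg at hlc
  rcases eq_or_lt_of_le hlc with heq | hlt
  · exact hP (leadingCoeff_eq_zero.mp heq)
  · by_cases hd : 0 < P.degree
    · have ht := Polynomial.tendsto_atBot_of_leadingCoeff_nonpos P hd hlc
      obtain ⟨x, hx1, hx2⟩ := ((ht.eventually (Filter.eventually_lt_atBot (0:ℝ))).and
        (Filter.eventually_ge_atTop a)).exists
      exact absurd (h x hx2) (not_le.mpr hx1)
    · push_neg at hd
      have hC : P = C (P.coeff 0) := Polynomial.eq_C_of_degree_le_zero hd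
      have h0 := h a le_rfl
      rw [hC] at h0
      simp at h0
      have : P.leadingCoeff = P.coeff 0 := by
        rw [hC]; simp [Polynomial.leadingCoeff]
      rw [this] at hlt
      exact absurd h0 (not_le.mpr hlt)

lemma natDegree_le_of_dominated (P Q : ℝ[X]) (a : ℝ)
    (h0 : ∀ x, a ≤ x → 0 ≤ P.eval x) (h1 : ∀ x, a ≤ x → P.eval x ≤ Q.eval x) :
    P = 0 ∨ P.natDegree ≤ Q.natDegree := by
  by_cases hP : P = 0
  · exact Or.inl hP
  right
  by_contra hlt
  push_neg at hlt
  have hQP : Q - P ≠ 0 := by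
    intro h
    have : Q = P := by linear_combination h
    rw [this] at hlt; exact lt_irrefl _ hlt
  have hlc1 : 0 < (Q - P).leadingCoeff :=
    lc_pos_of_nonneg_on_ray _ a (fun x hx => by
      have := h1 x hx; simp only [Polynomial.eval_sub]; linarith) hQP
  have hlcP : 0 < P.leadingCoeff := lc_pos_of_nonneg_on_ray P a h0 hP
  have hdeg : Q.degree < P.degree := Polynomial.degree_lt_degree hlt
  have h2 : (P - Q).leadingCoeff = P.leadingCoeff := Polynomial.leadingCoeff_sub_of_degree_lt hdeg
  have hneg : (Q - P).leadingCoeff = - P.leadingCoeff := by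
    rw [← h2, ← Polynomial.leadingCoeff_neg, neg_sub]
  rw [hneg] at hlc1
  linarith

lemma psd_natDegree_le_one (P : ℝ[X]) (h : ∀ x, 0 ≤ P.eval x) (hd : P.natDegree ≤ 1) :
    P = C (P.coeff 0) ∧ 0 ≤ P.coeff 0 := by
  have hd' : P.degree ≤ 1 := Polynomial.natDegree_le_iff_degree_le.mp hd
  have hrep := Polynomial.eq_X_add_C_of_degree_le_one hd'
  by_cases hA : P.coeff 1 = 0
  · rw [hA] at hrep
    simp only [map_zero, zero_mul, zero_add] at hrep
    refine ⟨hrep, ?_⟩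
    have := h 0
    rw [hrep] at this; simpa using this
  · exfalso
    have heval : ∀ t : ℝ, P.eval t = P.coeff 1 * t + P.coeff 0 := by
      intro t
      conv_lhs => rw [hrep]
      simp
    have := h ((-1 - P.coeff 0) / P.coeff 1)
    rw [heval, mul_div_cancel₀ _ hA] at this
    linarith

lemma sign_const_on_Ioo (P : ℝ[X]) (α β : ℝ) (hno : ∀ x ∈ Set.Ioo α β, P.eval x ≠ 0)
    (x y : ℝ) (hx : x ∈ Set.Ioo α β) (hy : y ∈ Set.Ioo α β) (hxneg : P.eval x < 0) :
    P.eval y < 0 := by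
  by_contra h
  push_neg at h
  have h0 : (0:ℝ) ∈ Set.uIcc (P.eval x) (P.eval y) :=
    Set.mem_uIcc.mpr (Or.inl ⟨le_of_lt hxneg, h⟩)
  have hsub : Set.uIcc x y ⊆ Set.Ioo α β := (Set.ordConnected_Ioo).uIcc_subset hx hy
  obtain ⟨z, hz, hz0⟩ := intermediate_value_uIcc (Continuous.continuousOn (P.continuous)) h0
  exact hno z (hsub hz) hz0

lemma pev_eq_eval (F : Subfield ℝ) (p : F[X]) (x : ℝ) :
    pev F p x = (p.map (algebraMap F ℝ)).eval x := by
  simp [pev, Polynomial.aeval_def, Polynomial.eval_map]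

lemma sumWtSq_nonneg (F : Subfield ℝ) (σ : F[X]) (h : SumWtSq F σ) (x : ℝ) :
    0 ≤ pev F σ x := by
  obtain ⟨n, t, g, ht, rfl⟩ := h
  rw [pev, map_sum]
  apply Finset.sum_nonneg
  intro i _
  rw [map_mul, map_pow, Polynomial.aeval_C]
  exact mul_nonneg (by exact ht i) (sq_nonneg _)

theorem stmt9 (F : Subfield ℝ) (K : Set ℝ)
    (hbasic : ∃ (s : ℕ) (S : Fin s → F[X]), K = {x : ℝ | ∀ i, 0 ≤ pev F (S i) x})
    (hnc : ¬ IsCompact K)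
    (a : F) (hray : Set.Ici (a:ℝ) ⊆ K)
    (c : ℝ) (hc : c ∈ frontier K)
    (halg : ∃ p : F[X], p ≠ 0 ∧ pev F p c = 0)
    (hdeg : ∀ p : F[X], p ≠ 0 → pev F p c = 0 → 3 ≤ p.natDegree) :
    ¬ ∃ (s : ℕ) (g : Fin s → F[X]),
      (∀ i, ∀ x ∈ K, 0 ≤ pev F (g i) x) ∧
      (∀ f : F[X], (∀ x ∈ K, 0 ≤ pev F f x) → InPre F g f) := by
  rintro ⟨s, g, hgpos, hrep⟩
  obtain ⟨s', S, hKeq⟩ := hbasic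
  classical
  -- membership criterion
  have hKmem : ∀ x : ℝ, x ∈ K ↔ ∀ i, 0 ≤ ((S i).map (algebraMap F ℝ)).eval x := by
    intro x
    rw [hKeq]
    simp only [Set.mem_setOf_eq, pev_eq_eval]
  -- K is closed
  have hKcl : IsClosed K := by
    have hK : K = ⋂ i, {x : ℝ | 0 ≤ ((S i).map (algebraMap F ℝ)).eval x} := by
      ext x
      simp only [hKmem, Set.mem_iInter, Set.mem_setOf_eq]
    rw [hK]
    exact isClosed_iInter fun i =>
      isClosed_le continuous_const (Polynomial.continuous _)
  have hcK : c ∈ K := hKcl.frontier_subset hc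
  have hcint : c ∉ interior K := fun h => hc.2 h
  -- the gap
  have hgap : ∃ δ : ℝ, 0 < δ ∧
      (Set.Ioo (c - δ) c ∩ K = ∅ ∨ Set.Ioo c (c + δ) ∩ K = ∅) := by
    set Z : Fin s' → Set ℝ := fun i =>
      {x | (S i).map (algebraMap F ℝ) ≠ 0 ∧ ((S i).map (algebraMap F ℝ)).IsRoot x} with hZ
    have hZfin : ∀ i, (Z i).Finite := by
      intro i
      by_cases h : (S i).map (algebraMap F ℝ) = 0
      · have : Z i = ∅ := by
          ext x
          simp only [hZ, Set.mem_setOf_eq, Set.mem_empty_iff_false, iff_false, not_and]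
          exact fun hx => absurd h hx
        rw [this]; exact Set.finite_empty
      · exact (Polynomial.finite_setOf_isRoot h).subset (fun x hx => hx.2)
    have hWfin : ((⋃ i, Z i) \ {c}).Finite := (Set.finite_iUnion hZfin).diff
    have hcW : c ∈ ((⋃ i, Z i) \ {c})ᶜ := fun h => h.2 rfl
    obtain ⟨δ, hδ, hball⟩ := Metric.isOpen_iff.mp hWfin.isClosed.isOpen_compl c hcW
    have hnoroot : ∀ x, x ≠ c → dist x c < δ → ∀ i, (S i).map (algebraMap F ℝ) ≠ 0 →
        ((S i).map (algebraMap F ℝ)).eval x ≠ 0 := by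
      intro x hxc hxd i hi hev
      exact (hball (Metric.mem_ball.mpr hxd)) ⟨Set.mem_iUnion.mpr ⟨i, hi, hev⟩, hxc⟩
    have hside : ∀ α β : ℝ, Set.Ioo α β ⊆ Set.Ioo (c - δ) (c + δ) → (c ∉ Set.Ioo α β) →
        (Set.Ioo α β ⊆ K ∨ Set.Ioo α β ∩ K = ∅) := by
      intro α β hsub hcnot
      by_cases hall : ∀ i, ∀ x ∈ Set.Ioo α β, 0 ≤ ((S i).map (algebraMap F ℝ)).eval x
      · left; intro x hx; exact (hKmem x).mpr (fun i => hall i x hx)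
      · right
        push_neg at hall
        obtain ⟨i, x, hx, hxneg⟩ := hall
        have hSine : (S i).map (algebraMap F ℝ) ≠ 0 := by
          intro h; rw [h] at hxneg; simp at hxneg
        have hall' : ∀ y ∈ Set.Ioo α β, ((S i).map (algebraMap F ℝ)).eval y < 0 := by
          intro y hy
          refine sign_const_on_Ioo _ _ _ ?_ x y hx hy hxneg
          intro z hz
          refine hnoroot z (fun h => hcnot (h ▸ hz)) ?_ i hSine
          have h1 := hsub hz
          rw [Real.dist_eq, abs_lt]
          constructor <;> [linarith [h1.1]; linarith [h1.2]]
        rw [Set.eq_empty_iff_forall_notMem]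
        rintro y ⟨hy1, hy2⟩
        exact absurd ((hKmem y).mp hy2 i) (not_le.mpr (hall' y hy1))
    have hL := hside (c - δ) c (fun z hz => ⟨hz.1, by linarith [hz.2]⟩) (fun h => lt_irrefl c h.2)
    have hR := hside c (c + δ) (fun z hz => ⟨by linarith [hz.1], hz.2⟩) (fun h => lt_irrefl c h.1)
    rcases hL with hL | hL
    · rcases hR with hR | hR
      · exfalso
        apply hcint
        apply mem_interior.mpr
        refine ⟨Set.Ioo (c - δ) (c + δ), ?_, isOpen_Ioo, ⟨by linarith, by linarith⟩⟩
        intro y hy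
        rcases lt_trichotomy y c with h | h | h
        · exact hL ⟨hy.1, h⟩
        · rwa [h]
        · exact hR ⟨h, hy.2⟩
      · exact ⟨δ, hδ, Or.inr hR⟩
    · exact ⟨δ, hδ, Or.inl hL⟩
  -- generator products
  let GF : (Fin s → Bool) → F[X] := fun e => ∏ i, (if e i then g i else 1)
  let G : (Fin s → Bool) → ℝ[X] := fun e => (GF e).map (algebraMap F ℝ)
  have hGprod : ∀ e, G e = ∏ i, (if e i then (g i).map (algebraMap F ℝ) else 1) := by
    intro e
    show (GF e).map (algebraMap F ℝ) = _
    rw [show GF e = ∏ i, (if e i then g i else 1) from rfl, Polynomial.map_prod]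
    apply Finset.prod_congr rfl
    intro i _
    split <;> simp
  have hGK : ∀ e, ∀ x ∈ K, 0 ≤ (G e).eval x := by
    intro e x hx
    rw [hGprod, Polynomial.eval_prod]
    apply Finset.prod_nonneg
    intro i _
    split
    · rw [← pev_eq_eval]; exact hgpos i x hx
    · simp
  have hGdeg : ∀ e, (GF e).natDegree = (G e).natDegree := fun e =>
    (Polynomial.natDegree_map_eq_of_injective (algebraMap F ℝ).injective _).symm
  have hGne : ∀ e, G e ≠ 0 → GF e ≠ 0 := by
    intro e h0 h
    apply h0
    show (GF e).map _ = 0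
    rw [h, Polynomial.map_zero]
  have hGc : ∀ e, G e ≠ 0 → (G e).natDegree ≤ 2 → 0 < (G e).eval c := by
    intro e h0 hd2
    rcases lt_or_eq_of_le (hGK e c hcK) with h | h
    · exact h
    · exfalso
      have h3 := hdeg (GF e) (hGne e h0) (by rw [pev_eq_eval]; exact h.symm)
      rw [hGdeg e] at h3
      omega
  let E12 : Finset (Fin s → Bool) :=
    Finset.univ.filter (fun e => G e ≠ 0 ∧ 1 ≤ (G e).natDegree ∧ (G e).natDegree ≤ 2)
  have hE12 : ∀ e, e ∈ E12 ↔ (G e ≠ 0 ∧ 1 ≤ (G e).natDegree ∧ (G e).natDegree ≤ 2) := by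
    intro e
    rw [show E12 = Finset.univ.filter
      (fun e => G e ≠ 0 ∧ 1 ≤ (G e).natDegree ∧ (G e).natDegree ≤ 2) from rfl,
      Finset.mem_filter]
    simp
  have hGcE : ∀ e ∈ E12, 0 < (G e).eval c := by
    intro e he
    have h := (hE12 e).mp he
    exact hGc e h.1 h.2.2
  let B : ℝ → ℝ := fun m => ∑ e ∈ E12, |(G e).eval m| / (G e).eval c
  have hBdef : ∀ m, B m = ∑ e ∈ E12, |(G e).eval m| / (G e).eval c := fun m => rfl
  have hB0 : ∀ m, 0 ≤ B m := by
    intro m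
    rw [hBdef]
    apply Finset.sum_nonneg
    intro e he
    exact div_nonneg (abs_nonneg _) (le_of_lt (hGcE e he))
  have core : ∀ (u v : F) (m : ℝ), (∀ x ∈ K, 0 ≤ (x - (u:ℝ)) * (x - (v:ℝ))) →
      ((u:ℝ) ≠ (v:ℝ)) →
      -(B m * (((c:ℝ) - (u:ℝ)) * ((c:ℝ) - (v:ℝ)))) ≤ (m - (u:ℝ)) * (m - (v:ℝ)) := by
    intro u v m hpos huv
    have hfPos : ∀ x ∈ K, 0 ≤ pev F ((X - C u) * (X - C v)) x := by
      intro x hx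
      have h1 : pev F ((X - C u) * (X - C v)) x = (x - (u:ℝ)) * (x - (v:ℝ)) := by
        simp [pev]; rfl
      rw [h1]; exact hpos x hx
    obtain ⟨σ, hσ, hid⟩ := hrep _ hfPos
    let P : (Fin s → Bool) → ℝ[X] := fun e => (σ e).map (algebraMap F ℝ)
    have hPpsd : ∀ e (x : ℝ), 0 ≤ (P e).eval x := by
      intro e x
      have := sumWtSq_nonneg F _ (hσ e) x
      rwa [pev_eq_eval] at this
    let Fq : ℝ[X] := ((X - C u) * (X - C v)).map (algebraMap F ℝ)
    have hFqeval : ∀ x : ℝ, Fq.eval x = (x - (u:ℝ)) * (x - (v:ℝ)) := by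
      intro x
      rw [show Fq = ((X - C u) * (X - C v)).map (algebraMap F ℝ) from rfl, ← pev_eq_eval]
      simp [pev]; rfl
    have huvF : u ≠ v := fun h => huv (by rw [h])
    have hFqdeg : Fq.natDegree = 2 := by
      rw [show Fq = ((X - C u) * (X - C v)).map (algebraMap F ℝ) from rfl,
        Polynomial.natDegree_map_eq_of_injective (algebraMap F ℝ).injective,
        Polynomial.natDegree_mul (X_sub_C_ne_zero u) (X_sub_C_ne_zero v),
        natDegree_X_sub_C, natDegree_X_sub_C]
    have hidR : Fq = ∑ e : Fin s → Bool, P e * G e := by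
      rw [show Fq = ((X - C u) * (X - C v)).map (algebraMap F ℝ) from rfl, hid,
        Polynomial.map_sum]
      apply Finset.sum_congr rfl
      intro e _
      rw [Polynomial.map_mul]
    have hidEval : ∀ x : ℝ, Fq.eval x = ∑ e : Fin s → Bool, (P e).eval x * (G e).eval x := by
      intro x
      rw [hidR, Polynomial.eval_finset_sum]
      apply Finset.sum_congr rfl
      intro e _
      rw [Polynomial.eval_mul]
    have htermK : ∀ e, ∀ x ∈ K, (P e).eval x * (G e).eval x ≤ Fq.eval x := by
      intro e x hx
      rw [hidEval x]
      exact Finset.single_le_sum (f := fun e' => (P e').eval x * (G e').eval x)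
        (fun e' _ => mul_nonneg (hPpsd e' x) (hGK e' x hx)) (Finset.mem_univ e)
    have hdb : ∀ e, P e ≠ 0 → G e ≠ 0 → (P e).natDegree + (G e).natDegree ≤ 2 := by
      intro e hP hG
      have h1 : ∀ x, (a:ℝ) ≤ x → 0 ≤ (P e * G e).eval x := by
        intro x hx
        rw [Polynomial.eval_mul]
        exact mul_nonneg (hPpsd e x) (hGK e x (hray hx))
      have h2 : ∀ x, (a:ℝ) ≤ x → (P e * G e).eval x ≤ Fq.eval x := by
        intro x hx
        rw [Polynomial.eval_mul]
        exact htermK e x (hray hx)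
      rcases natDegree_le_of_dominated _ Fq (a:ℝ) h1 h2 with h | h
      · exact absurd h (mul_ne_zero hP hG)
      · rwa [Polynomial.natDegree_mul hP hG, hFqdeg] at h
    have hPconst : ∀ e ∈ E12, P e = C ((P e).coeff 0) ∧ 0 ≤ (P e).coeff 0 := by
      intro e he
      by_cases hP : P e = 0
      · refine ⟨?_, ?_⟩
        · rw [hP]; simp
        · rw [hP]; simp
      · have he' := (hE12 e).mp he
        have hb := hdb e hP he'.1
        apply psd_natDegree_le_one _ (hPpsd e)
        omega
    have hFqc : 0 ≤ Fq.eval c := by rw [hFqeval]; exact hpos c hcK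
    have hτ : ∀ e ∈ E12, (P e).coeff 0 * (G e).eval c ≤ Fq.eval c := by
      intro e he
      have h1 := htermK e c hcK
      rw [(hPconst e he).1] at h1
      simpa using h1
    have hmain : ∑ e ∈ E12, (P e).coeff 0 * (G e).eval m ≤ Fq.eval m := by
      have hE : ∑ e ∈ E12, (P e).coeff 0 * (G e).eval m
          = ∑ e ∈ E12, (P e).eval m * (G e).eval m := by
        apply Finset.sum_congr rfl
        intro e he
        rw [(hPconst e he).1]; simp
      have hsplit := Finset.sum_filter_add_sum_filter_not Finset.univ
        (fun e => G e ≠ 0 ∧ 1 ≤ (G e).natDegree ∧ (G e).natDegree ≤ 2)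
        (fun e => (P e).eval m * (G e).eval m)
      have hnn : 0 ≤ ∑ e ∈ Finset.univ.filter
          (fun e => ¬(G e ≠ 0 ∧ 1 ≤ (G e).natDegree ∧ (G e).natDegree ≤ 2)),
          (P e).eval m * (G e).eval m := by
        apply Finset.sum_nonneg
        intro e he
        have he' := (Finset.mem_filter.mp he).2
        by_cases hG0 : G e = 0
        · rw [hG0]; simp
        · by_cases hd : (G e).natDegree = 0
          · have hk := Polynomial.eq_C_of_natDegree_le_zero (le_of_eq hd)
            have hk0 : 0 ≤ (G e).coeff 0 := by
              have := hGK e c hcK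
              rw [hk] at this
              simpa using this
            rw [hk]
            simp only [Polynomial.eval_C]
            exact mul_nonneg (hPpsd e m) hk0
          · have h3 : 3 ≤ (G e).natDegree := by
              by_contra hcon
              push_neg at hcon
              exact he' ⟨hG0, by omega, by omega⟩
            by_cases hP0 : P e = 0
            · rw [hP0]; simp
            · have := hdb e hP0 hG0
              omega
      calc ∑ e ∈ E12, (P e).coeff 0 * (G e).eval m
          = ∑ e ∈ E12, (P e).eval m * (G e).eval m := hE
        _ ≤ (∑ e ∈ E12, (P e).eval m * (G e).eval m) + _ := le_add_of_nonneg_right hnn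
        _ = ∑ e : Fin s → Bool, (P e).eval m * (G e).eval m := hsplit
        _ = Fq.eval m := (hidEval m).symm
    have hlow : -(B m * Fq.eval c) ≤ ∑ e ∈ E12, (P e).coeff 0 * (G e).eval m := by
      have hbnd : ∀ e ∈ E12,
          -((|(G e).eval m| / (G e).eval c) * Fq.eval c) ≤ (P e).coeff 0 * (G e).eval m := by
        intro e he
        have hGcpos := hGcE e he
        have hτe := hτ e he
        have hτ0 := (hPconst e he).2
        have h1 : (P e).coeff 0 ≤ Fq.eval c / (G e).eval c := (le_div_iff₀ hGcpos).mpr hτe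
        have h2 : -((P e).coeff 0 * |(G e).eval m|) ≤ (P e).coeff 0 * (G e).eval m := by
          nlinarith [abs_nonneg ((G e).eval m), neg_abs_le ((G e).eval m)]
        have h3 : (P e).coeff 0 * |(G e).eval m| ≤ (Fq.eval c / (G e).eval c) * |(G e).eval m| :=
          mul_le_mul_of_nonneg_right h1 (abs_nonneg _)
        have h4 : (|(G e).eval m| / (G e).eval c) * Fq.eval c
            = (Fq.eval c / (G e).eval c) * |(G e).eval m| := by
          field_simp
        linarith
      have hs := Finset.sum_le_sum hbnd
      have hBs : -(B m * Fq.eval c)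
          = ∑ e ∈ E12, -((|(G e).eval m| / (G e).eval c) * Fq.eval c) := by
        rw [hBdef, Finset.sum_mul, ← Finset.sum_neg_distrib]
      rw [hBs]
      exact hs
    have hfin := le_trans hlow hmain
    rw [hFqeval m, hFqeval c] at hfin
    exact hfin
  have hcast : ∀ t : ℚ, ((t : F) : ℝ) = (t : ℝ) := fun t => by push_cast; ring
  obtain ⟨δ, hδ, hcase⟩ := hgap
  rcases hcase with hgapL | hgapR
  · -- left gap : Ioo (c-δ) c ∩ K = ∅
    obtain ⟨r, hr1, hr2⟩ := exists_rat_btwn (show c - δ < c by linarith)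
    set m : ℝ := ((r:ℝ) + c) / 2 with hm
    have hrm : (r:ℝ) < m := by rw [hm]; linarith
    have hmc : m < c := by rw [hm]; linarith
    have hB0m : 0 ≤ B m := hB0 m
    set κ : ℝ := (c - m) * (m - r) with hκ
    have hκpos : 0 < κ := mul_pos (by linarith) (by linarith)
    set D : ℝ := (m - r) + B m * (c - r) + 1 with hD
    have hDpos : 0 < D := by
      have h0 : 0 ≤ B m * (c - r) := mul_nonneg hB0m (by linarith)
      rw [hD]; linarith
    have hκD : 0 < κ / D := div_pos hκpos hDpos
    obtain ⟨q, hq1, hq2⟩ := exists_rat_btwn (show max m (c - κ / D) < c from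
      max_lt hmc (by linarith))
    have hqm : m < (q:ℝ) := lt_of_le_of_lt (le_max_left _ _) hq1
    have hqlt : c - κ / D < (q:ℝ) := lt_of_le_of_lt (le_max_right _ _) hq1
    have hrq : (r:ℝ) < (q:ℝ) := lt_trans hrm hqm
    have hpos : ∀ x ∈ K, 0 ≤ (x - (((r:F)):ℝ)) * (x - (((q:F)):ℝ)) := by
      intro x hx
      rw [hcast, hcast]
      have hnot : ¬((r:ℝ) < x ∧ x < c) := by
        rintro ⟨h1, h2⟩
        have : x ∈ Set.Ioo (c - δ) c ∩ K := ⟨⟨by linarith, h2⟩, hx⟩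
        rw [hgapL] at this
        exact this
      rcases le_or_gt x r with h | h
      · have e1 : x - (r:ℝ) ≤ 0 := by linarith
        have e2 : x - (q:ℝ) ≤ 0 := by linarith
        nlinarith
      · have hxc : c ≤ x := by
          by_contra hcon
          push_neg at hcon
          exact hnot ⟨h, hcon⟩
        exact mul_nonneg (by linarith) (by linarith)
    have hcore := core (r:F) (q:F) m hpos (by rw [hcast, hcast]; exact ne_of_lt hrq)
    rw [hcast, hcast] at hcore
    have hid1 : (m - (r:ℝ)) * (m - (q:ℝ)) + B m * ((c - (r:ℝ)) * (c - (q:ℝ)))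
        = -κ + (c - (q:ℝ)) * D - (c - (q:ℝ)) := by
      rw [hκ, hD]; ring
    have h6 : (c:ℝ) - q < κ / D := by linarith
    have h5 : (c - (q:ℝ)) * D < κ := (lt_div_iff₀ hDpos).mp h6
    have h7 : (0:ℝ) < c - q := by linarith
    linarith
  · -- right gap : Ioo c (c+δ) ∩ K = ∅
    obtain ⟨r, hr1, hr2⟩ := exists_rat_btwn (show c < c + δ by linarith)
    set m : ℝ := (c + (r:ℝ)) / 2 with hm
    have hcm : c < m := by rw [hm]; linarith
    have hmr : m < (r:ℝ) := by rw [hm]; linarith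
    have hB0m : 0 ≤ B m := hB0 m
    set κ : ℝ := (m - c) * ((r:ℝ) - m) with hκ
    have hκpos : 0 < κ := mul_pos (by linarith) (by linarith)
    set D : ℝ := ((r:ℝ) - m) + B m * ((r:ℝ) - c) + 1 with hD
    have hDpos : 0 < D := by
      have h0 : 0 ≤ B m * ((r:ℝ) - c) := mul_nonneg hB0m (by linarith)
      rw [hD]; linarith
    have hκD : 0 < κ / D := div_pos hκpos hDpos
    obtain ⟨q, hq1, hq2⟩ := exists_rat_btwn (show c < min m (c + κ / D) from
      lt_min hcm (by linarith))
    have hqm : (q:ℝ) < m := lt_of_lt_of_le hq2 (min_le_left _ _)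
    have hqlt : (q:ℝ) < c + κ / D := lt_of_lt_of_le hq2 (min_le_right _ _)
    have hqr : (q:ℝ) < (r:ℝ) := lt_trans hqm hmr
    have hpos : ∀ x ∈ K, 0 ≤ (x - (((q:F)):ℝ)) * (x - (((r:F)):ℝ)) := by
      intro x hx
      rw [hcast, hcast]
      have hnot : ¬(c < x ∧ x < (r:ℝ)) := by
        rintro ⟨h1, h2⟩
        have : x ∈ Set.Ioo c (c + δ) ∩ K := ⟨⟨h1, by linarith⟩, hx⟩
        rw [hgapR] at this
        exact this
      rcases le_or_gt x c with h | h
      · have e1 : x - (q:ℝ) ≤ 0 := by linarith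
        have e2 : x - (r:ℝ) ≤ 0 := by linarith
        nlinarith
      · have hxr : (r:ℝ) ≤ x := by
          by_contra hcon
          push_neg at hcon
          exact hnot ⟨h, hcon⟩
        exact mul_nonneg (by linarith) (by linarith)
    have hcore := core (q:F) (r:F) m hpos (by rw [hcast, hcast]; exact ne_of_lt hqr)
    rw [hcast, hcast] at hcore
    have hid1 : (m - (q:ℝ)) * (m - (r:ℝ)) + B m * ((c - (q:ℝ)) * (c - (r:ℝ)))
        = -κ + ((q:ℝ) - c) * D - ((q:ℝ) - c) := by
      rw [hκ, hD]; ring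
    have h6 : (q:ℝ) - c < κ / D := by linarith
    have h5 : ((q:ℝ) - c) * D < κ := (lt_div_iff₀ hDpos).mp h6
    have h7 : (0:ℝ) < (q:ℝ) - c := by linarith
    linarith
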